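/- Let F be a positive CNF formula with k variables and n ≥ 1 clauses (each clause a nonempty subset of the variables), where k is odd. Then every minimum connected dominating set of G_F contains exactly three vertices from the copy of the graph A. -/

import Mathlib

namespace CDG

/-- Vertices of the graph `B`. -/
inductive BVert : Type
  | a | e | b | b' | h | k | f1 | g1 | f2 | g2

/-- The edges of the graph `B`. -/
def BRel : BVert → BVert → Prop
  | .a, .e => True
  | .e, .b => True
  | .b, .b' => True
  | .a, .h => True
  | .h, .e => True
  | .e, .f1 => True
  | .f1, .b => True
  | .b, .f2 => True
  | .f2, .e => True
  | .e, .g1 => True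
  | .g1, .f1 => True
  | .e, .g2 => True
  | .g2, .f2 => True
  | .h, .k => True
  | .k, .a => True
  | _, _ => False

/-- The graph `B`. -/
def graphB : SimpleGraph BVert := SimpleGraph.fromRel BRel

/-- `S` is a connected dominating set of `G`: every vertex is in `S` or adjacent to a
vertex of `S`, and the subgraph induced by `S` is connected. -/
def IsConnDomSet {V : Type*} (G : SimpleGraph V) (S : Set V) : Prop :=
  (∀ v : V, v ∈ S ∨ ∃ u ∈ S, G.Adj u v) ∧ (G.induce S).Connected

/-- The connected domination number of `G`. -/
noncomputable def connDomNum {V : Type*} (G : SimpleGraph V) : ℕ :=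
  sInf {m | ∃ S : Set V, IsConnDomSet G S ∧ S.ncard = m}

/-- Vertices of the graph `H n`: `u i` is `u_i` for `0 ≤ i ≤ n+1`, `x t` is `x_{t+1}` and
`y t` is `y_{t+1}` for `0 ≤ t ≤ n-2`. -/
inductive HVert (n : ℕ) : Type
  | u : Fin (n + 2) → HVert n
  | x : Fin (n - 1) → HVert n
  | y : Fin (n - 1) → HVert n

/-- The edges of the graph `H n`. -/
def HRel (n : ℕ) : HVert n → HVert n → Prop
  | .u i, .u j => (j : ℕ) = (i : ℕ) + 1
  | .u i, .x t => (i : ℕ) = (t : ℕ) + 1 ∨ (i : ℕ) = (t : ℕ) + 2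
  | .x t, .y s => t = s
  | .y s, .u i => (i : ℕ) = (s : ℕ) + 2
  | _, _ => False

/-- The graph `H n`. -/
def graphH (n : ℕ) : SimpleGraph (HVert n) := SimpleGraph.fromRel (HRel n)

/-- Vertices of the graph `C m`: `cc i` is `c^{i+1}` and `dd i` is `d^{i+1}` for `0 ≤ i ≤ m-1`. -/
inductive CVert (m : ℕ) : Type
  | c : CVert m
  | d : CVert m
  | cc : Fin m → CVert m
  | dd : Fin m → CVert m

/-- The edges of the graph `C m`. -/
def CRel (m : ℕ) : CVert m → CVert m → Prop
  | .c, .d => True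
  | .c, .dd _ => True
  | .cc i, .dd j => i = j
  | _, _ => False

/-- The graph `C m`. -/
def graphC (m : ℕ) : SimpleGraph (CVert m) := SimpleGraph.fromRel (CRel m)

/-- Vertices of the graph `A`. -/
inductive AVert : Type
  | p1 | p2 | p3 | q1 | q2 | r1 | r2

/-- The edges of the graph `A`. -/
def ARel : AVert → AVert → Prop
  | .p1, .p2 => True
  | .p2, .p3 => True
  | .p1, .q1 => True
  | .q1, .r1 => True
  | .p2, .q1 => True
  | .p2, .r1 => True
  | .p2, .q2 => True
  | .q2, .r2 => True
  | .p3, .q2 => True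
  | .p3, .r2 => True
  | _, _ => False

/-- Vertices of the graph `G_F`, for a formula with `k` variables and `n` clauses:
`k` copies of `B`, `n` copies of `C n`, one copy of `H (2n+7)`, and a copy of `A`
exactly when `k` is odd (realized as `AVert × Fin (k % 2)`). -/
abbrev GVert (k n : ℕ) : Type :=
  (Fin k × BVert) ⊕ (Fin n × CVert n) ⊕ HVert (2 * n + 7) ⊕ (AVert × Fin (k % 2))

/-- The edges of the graph `G_F`, where the formula `F` assigns to each clause `j`
the (nonempty) set of variables appearing in it. -/
def GRel (k n : ℕ) (F : Fin n → Finset (Fin k)) : GVert k n → GVert k n → Prop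
  | .inl (i, v), .inl (i', w) => i = i' ∧ BRel v w
  | .inr (.inl (j, v)), .inr (.inl (j', w)) => j = j' ∧ CRel n v w
  | .inr (.inr (.inl v)), .inr (.inr (.inl w)) => HRel (2 * n + 7) v w
  | .inr (.inr (.inr (v, _))), .inr (.inr (.inr (w, _))) => ARel v w
  | .inr (.inl (j, v)), .inl (i, w) =>
      i ∈ F j ∧ w = .a ∧ (v = .c ∨ ∃ t, v = .cc t)
  | .inr (.inr (.inl v)), .inl (i, w) =>
      v = .u ⟨0, by omega⟩ ∧ (w = .a ∨ w = .b)
  | .inr (.inr (.inr (v, _))), .inr (.inr (.inl w)) =>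
      v = .p1 ∧ w = .u ⟨0, by omega⟩
  | _, _ => False

/-- The graph `G_F`. -/
def graphGF (k n : ℕ) (F : Fin n → Finset (Fin k)) : SimpleGraph (GVert k n) :=
  SimpleGraph.fromRel (GRel k n F)

/-- Vertices of the graph `G'_F`, for a formula with `k` variables and `n` clauses:
`k` copies of `B`, `n` copies of `C n`, one copy of `H 6`, and a copy of `A`
exactly when `k` is odd (realized as `AVert × Fin (k % 2)`). -/
abbrev GVert' (k n : ℕ) : Type :=
  (Fin k × BVert) ⊕ (Fin n × CVert n) ⊕ HVert 6 ⊕ (AVert × Fin (k % 2))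

/-- The edges of the graph `G'_F`. -/
def GRel' (k n : ℕ) (F : Fin n → Finset (Fin k)) : GVert' k n → GVert' k n → Prop
  | .inl (i, v), .inl (i', w) => i = i' ∧ BRel v w
  | .inr (.inl (j, v)), .inr (.inl (j', w)) => j = j' ∧ CRel n v w
  | .inr (.inr (.inl v)), .inr (.inr (.inl w)) => HRel 6 v w
  | .inr (.inr (.inr (v, _))), .inr (.inr (.inr (w, _))) => ARel v w
  | .inr (.inl (j, v)), .inl (i, w) =>
      i ∈ F j ∧ w = .a ∧ (v = .c ∨ ∃ t, v = .cc t)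
  | .inr (.inr (.inl v)), .inl (i, w) =>
      v = .u ⟨7, by omega⟩ ∧ (w = .a ∨ w = .b)
  | .inr (.inr (.inr (v, _))), .inr (.inr (.inl w)) =>
      v = .p1 ∧ w = .u ⟨7, by omega⟩
  | _, _ => False

/-- The graph `G'_F`. -/
def graphGF' (k n : ℕ) (F : Fin n → Finset (Fin k)) : SimpleGraph (GVert' k n) :=
  SimpleGraph.fromRel (GRel' k n F)


deriving instance DecidableEq for BVert
deriving instance DecidableEq for AVert

instance : Fintype BVert :=
  Fintype.ofList [.a, .e, .b, .b', .h, .k, .f1, .g1, .f2, .g2] (by intro x; cases x <;> simp)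

instance : Fintype AVert :=
  Fintype.ofList [.p1, .p2, .p3, .q1, .q2, .r1, .r2] (by intro x; cases x <;> simp)
deriving instance DecidableEq, Fintype for HVert
deriving instance DecidableEq, Fintype for CVert

section Aux

variable {k n : ℕ} {F : Fin n → Finset (Fin k)}

/-- Shorthand for A-vertices of `G_F`. -/
def mkA (w : AVert) (t : Fin (k % 2)) : GVert k n := .inr (.inr (.inr (w, t)))

/-- The set of A-vertices. -/
def Aset (k n : ℕ) : Set (GVert k n) :=
  {v : GVert k n | ∃ (w : AVert) (t : Fin (k % 2)), v = mkA w t}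

lemma mkA_mem_Aset (w : AVert) (t : Fin (k % 2)) : mkA w t ∈ Aset k n := ⟨w, t, rfl⟩

lemma Aset_eq : Aset k n = {v : GVert k n |
    ∃ (w : AVert) (t : Fin (k % 2)), v = .inr (.inr (.inr (w, t)))} := rfl

lemma mkA_inj {v w : AVert} {t t' : Fin (k % 2)} (h : (mkA v t : GVert k n) = mkA w t') :
    v = w ∧ t = t' := by
  simpa [mkA, Prod.ext_iff] using h

lemma adj_iff {x y : GVert k n} :
    (graphGF k n F).Adj x y ↔ x ≠ y ∧ (GRel k n F x y ∨ GRel k n F y x) := by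
  simp [graphGF, SimpleGraph.fromRel_adj]

/-- The only edge leaving the A-copy goes from `p1` to `u 0`. -/
lemma cross {v : AVert} {t : Fin (k % 2)} {y : GVert k n}
    (h : (graphGF k n F).Adj (mkA v t) y) (hy : y ∉ Aset k n) :
    v = .p1 ∧ y = .inr (.inr (.inl (.u ⟨0, by omega⟩))) := by
  rw [adj_iff] at h
  obtain ⟨-, h | h⟩ := h
  · rcases y with (⟨i, w⟩ | ⟨⟨j, w⟩ | (w | ⟨w, t'⟩)⟩)
    · exact absurd h (by simp [mkA, GRel])
    · exact absurd h (by simp [mkA, GRel])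
    · simpa [mkA, GRel] using h
    · exact absurd (mkA_mem_Aset w t') hy
  · rcases y with (⟨i, w⟩ | ⟨⟨j, w⟩ | (w | ⟨w, t'⟩)⟩)
    · exact absurd h (by simp [mkA, GRel])
    · exact absurd h (by simp [mkA, GRel])
    · exact absurd h (by simp [mkA, GRel])
    · exact absurd (mkA_mem_Aset w t') hy

lemma adjA {v w : AVert} (t : Fin (k % 2)) (hvw : v ≠ w) (h : ARel v w) :
    (graphGF k n F).Adj (mkA v t) (mkA w t) := by
  rw [adj_iff]
  refine ⟨fun hh => hvw (mkA_inj hh).1, Or.inl ?_⟩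
  simpa [mkA, GRel] using h

lemma adjA_rel {v w : AVert} {t t' : Fin (k % 2)}
    (h : (graphGF k n F).Adj (mkA v t) (mkA w t')) : ARel v w ∨ ARel w v := by
  rw [adj_iff] at h
  simpa [mkA, GRel] using h.2

/-- Neighbours of `q2`, `p3`, `r2` all lie in the A-copy and differ from `p1`. -/
lemma nbr_z {v : AVert} {t : Fin (k % 2)} {y : GVert k n}
    (hv : v = .q2 ∨ v = .p3 ∨ v = .r2)
    (h : (graphGF k n F).Adj (mkA v t) y) :
    y ∈ Aset k n ∧ ∀ t' : Fin (k % 2), y ≠ mkA .p1 t' := by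
  constructor
  · by_contra hy
    have := (cross h hy).1
    rcases hv with rfl | rfl | rfl <;> simp_all
  · rintro t' rfl
    have := adjA_rel h
    rcases hv with rfl | rfl | rfl <;> simp [ARel] at this

/-- Vertices dominating `r2` are `r2`, `q2` or `p3`. -/
lemma dom_r2 {t : Fin (k % 2)} {u : GVert k n}
    (h : (graphGF k n F).Adj u (mkA .r2 t)) :
    ∃ (w : AVert) (t' : Fin (k % 2)), u = mkA w t' ∧ (w = .q2 ∨ w = .p3) := by
  by_cases hu : u ∈ Aset k n
  · obtain ⟨w, t', rfl⟩ := hu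
    have hrel := adjA_rel (h.symm : (graphGF k n F).Adj (mkA .r2 t) (mkA w t'))
    refine ⟨w, t', rfl, ?_⟩
    cases w <;> simp [ARel] at hrel <;> simp
  · have := (cross h.symm hu).1
    simp at this

/-- If an induced walk starts in the A-copy and ends outside, then `p1` lies in `S`. -/
lemma boundary {S : Set (GVert k n)} :
    ∀ {a b : ↑S}, ((graphGF k n F).induce S).Walk a b → a.val ∈ Aset k n →
      b.val ∉ Aset k n → ∃ t : Fin (k % 2), mkA .p1 t ∈ S := by
  intro a b w
  induction w with
  | nil => intro h1 h2; exact absurd h1 h2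
  | @cons a c b h p ih =>
    intro ha hb
    by_cases hc : c.val ∈ Aset k n
    · exact ih hc hb
    · obtain ⟨v, t, hav⟩ := ha
      have hadj : (graphGF k n F).Adj (mkA v t) c.val := by
        rw [← hav]; exact h
      obtain ⟨hv, -⟩ := cross hadj hc
      subst hv
      exact ⟨t, by rw [show (mkA AVert.p1 t : GVert k n) = ↑a from hav.symm]; exact a.2⟩

/-- Collapse map sending the A-copy to `p1`. -/
def fv (t0 : Fin (k % 2)) : GVert k n → GVert k n
  | .inr (.inr (.inr _)) => mkA .p1 t0
  | v => v

lemma fv_of_mem {x : GVert k n} (h : x ∈ Aset k n) (t0 : Fin (k % 2)) :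
    fv t0 x = mkA .p1 t0 := by
  obtain ⟨w, t, rfl⟩ := h; rfl

lemma fv_of_not_mem {x : GVert k n} (h : x ∉ Aset k n) (t0 : Fin (k % 2)) :
    fv t0 x = x := by
  rcases x with (⟨i, w⟩ | ⟨⟨j, w⟩ | (w | ⟨w, t'⟩)⟩)
  · rfl
  · rfl
  · rfl
  · exact absurd (mkA_mem_Aset w t') h

/-- Transfer of reachability to the modified set `S'`. -/
lemma transfer (hk : Odd k) {S S' : Set (GVert k n)} {t0 : Fin (k % 2)}
    (hp1 : (mkA .p1 t0 : GVert k n) ∈ S')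
    (hSS' : ∀ x ∈ S, x ∉ Aset k n → x ∈ S') :
    ∀ {a b : ↑S}, ((graphGF k n F).induce S).Walk a b →
      ∀ (ha : fv t0 a.val ∈ S') (hb : fv t0 b.val ∈ S'),
      ((graphGF k n F).induce S').Reachable ⟨fv t0 a.val, ha⟩ ⟨fv t0 b.val, hb⟩ := by
  have hk1 : k % 2 = 1 := Nat.odd_iff.mp hk
  have tsub : ∀ t t' : Fin (k % 2), t = t' := fun t t' => Fin.ext (by omega)
  intro a b w
  induction w with
  | nil => intro ha hb; rfl
  | @cons a c b h p ih =>
    intro ha hb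
    have hc : fv t0 c.val ∈ S' := by
      by_cases hcc : c.val ∈ Aset k n
      · rw [fv_of_mem hcc]; exact hp1
      · rw [fv_of_not_mem hcc]; exact hSS' c.val c.2 hcc
    refine SimpleGraph.Reachable.trans ?_ (ih hc hb)
    by_cases hA : a.val ∈ Aset k n <;> by_cases hB : c.val ∈ Aset k n
    · have : (⟨fv t0 a.val, ha⟩ : ↑S') = ⟨fv t0 c.val, hc⟩ :=
        Subtype.ext (by show fv t0 a.val = fv t0 c.val; rw [fv_of_mem hA, fv_of_mem hB])
      rw [this]
    · obtain ⟨v, t, hav⟩ := hA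
      have hadj : (graphGF k n F).Adj (mkA v t) c.val := by rw [← hav]; exact h
      obtain ⟨hv, -⟩ := cross hadj hB
      subst hv
      have hfa : fv t0 a.val = mkA .p1 t0 := fv_of_mem ⟨_, _, hav⟩ t0
      have hfc : fv t0 c.val = c.val := fv_of_not_mem hB t0
      have hadj' : ((graphGF k n F).induce S').Adj ⟨fv t0 a.val, ha⟩ ⟨fv t0 c.val, hc⟩ := by
        show (graphGF k n F).Adj (fv t0 a.val) (fv t0 c.val)
        rw [hfa, hfc, tsub t0 t]
        exact hadj
      exact hadj'.reachable
    · obtain ⟨v, t, hcv⟩ := hB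
      have hadj : (graphGF k n F).Adj (mkA v t) a.val := by rw [← hcv]; exact h.symm
      obtain ⟨hv, -⟩ := cross hadj hA
      subst hv
      have hfa : fv t0 a.val = a.val := fv_of_not_mem hA t0
      have hfc : fv t0 c.val = mkA .p1 t0 := fv_of_mem ⟨_, _, hcv⟩ t0
      have hadj' : ((graphGF k n F).induce S').Adj ⟨fv t0 a.val, ha⟩ ⟨fv t0 c.val, hc⟩ := by
        show (graphGF k n F).Adj (fv t0 a.val) (fv t0 c.val)
        rw [hfa, hfc, tsub t0 t]
        exact hadj.symm
      exact hadj'.reachable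
    · have hadj' : ((graphGF k n F).induce S').Adj ⟨fv t0 a.val, ha⟩ ⟨fv t0 c.val, hc⟩ := by
        show (graphGF k n F).Adj (fv t0 a.val) (fv t0 c.val)
        rw [fv_of_not_mem hA, fv_of_not_mem hB]
        exact h
      exact hadj'.reachable

lemma exists_nbr {V : Type*} {G : SimpleGraph V} {x y : V} (w : G.Walk x y) (hxy : x ≠ y) :
    ∃ c, G.Adj x c := by
  cases w with
  | nil => exact absurd rfl hxy
  | cons h p => exact ⟨_, h⟩

end Aux

theorem min_connDomSet_three_in_A_of_odd (k n : ℕ) (hkodd : Odd k) (hn : 1 ≤ n)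
    (F : Fin n → Finset (Fin k)) (hF : ∀ j, (F j).Nonempty)
    (S : Set (GVert k n)) (hS : IsConnDomSet (graphGF k n F) S)
    (hmin : S.ncard = connDomNum (graphGF k n F)) :
    (S ∩ {v : GVert k n |
      ∃ (w : AVert) (t : Fin (k % 2)), v = .inr (.inr (.inr (w, t)))}).ncard = 3 := by
  classical
  have hk1 : k % 2 = 1 := Nat.odd_iff.mp hkodd
  have hk0 : 0 < k := by omega
  set t0 : Fin (k % 2) := ⟨0, by omega⟩ with ht0
  have tsub : ∀ t : Fin (k % 2), t = t0 := fun t => Fin.ext (by have := t.isLt; omega)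
  obtain ⟨hdom, hconn⟩ := hS
  rw [← Aset_eq]
  -- an outside vertex in S
  have ho : ∃ o ∈ S, o ∉ Aset k n := by
    rcases hdom (Sum.inl (⟨0, hk0⟩, BVert.b')) with h | ⟨u, hu, hadj⟩
    · exact ⟨_, h, by rintro ⟨w, t, hw⟩; simp [mkA] at hw⟩
    · refine ⟨u, hu, ?_⟩
      rintro ⟨w, t, rfl⟩
      have := (cross hadj (by rintro ⟨w', t', hw⟩; simp [mkA] at hw)).2
      simp [mkA] at this
  -- a vertex of S dominating r2
  have hz : ∃ v : AVert, (v = .q2 ∨ v = .p3 ∨ v = .r2) ∧ (mkA v t0 : GVert k n) ∈ S := by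
    rcases hdom (mkA .r2 t0) with h | ⟨u, hu, hadj⟩
    · exact ⟨.r2, by simp, h⟩
    · obtain ⟨w, t', rfl, hw⟩ := dom_r2 hadj
      exact ⟨w, by tauto, by rwa [tsub t'] at hu⟩
  obtain ⟨vz, hvz, hzS⟩ := hz
  obtain ⟨o, hoS, hoA⟩ := ho
  have hzA : (mkA vz t0 : GVert k n) ∈ Aset k n := mkA_mem_Aset _ _
  -- p1 belongs to S
  have hp1S : (mkA .p1 t0 : GVert k n) ∈ S := by
    obtain ⟨w⟩ := hconn.preconnected ⟨mkA vz t0, hzS⟩ ⟨o, hoS⟩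
    obtain ⟨t, ht⟩ := boundary w hzA hoA
    rwa [tsub t] at ht
  have hzp1 : vz ≠ AVert.p1 := by rcases hvz with rfl | rfl | rfl <;> simp
  -- a third vertex of S in the A-copy
  obtain ⟨wv⟩ := hconn.preconnected ⟨mkA vz t0, hzS⟩ ⟨mkA .p1 t0, hp1S⟩
  have hsne : (⟨mkA vz t0, hzS⟩ : ↑S) ≠ ⟨mkA .p1 t0, hp1S⟩ := by
    intro h
    exact hzp1 (mkA_inj (congrArg Subtype.val h)).1
  obtain ⟨c, hcadj⟩ := exists_nbr wv hsne
  have hcadj' : (graphGF k n F).Adj (mkA vz t0) c.val := hcadj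
  obtain ⟨hcA, hcnp1⟩ := nbr_z hvz hcadj'
  have hcnz : c.val ≠ mkA vz t0 := hcadj'.ne'
  -- lower bound
  have h3 : 3 ≤ (S ∩ Aset k n).ncard := by
    have hsub : ({mkA .p1 t0, mkA vz t0, c.val} : Set (GVert k n)) ⊆ S ∩ Aset k n := by
      rintro x (rfl | rfl | rfl)
      · exact ⟨hp1S, mkA_mem_Aset _ _⟩
      · exact ⟨hzS, hzA⟩
      · exact ⟨c.2, hcA⟩
    have hcard : ({mkA .p1 t0, mkA vz t0, c.val} : Set (GVert k n)).ncard = 3 :=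
      Set.ncard_eq_three.mpr ⟨_, _, _,
        fun h => hzp1 (mkA_inj h).1.symm, (hcnp1 t0).symm, hcnz.symm, rfl⟩
    calc 3 = ({mkA .p1 t0, mkA vz t0, c.val} : Set (GVert k n)).ncard := hcard.symm
      _ ≤ (S ∩ Aset k n).ncard := Set.ncard_le_ncard hsub (Set.toFinite _)
  -- upper bound
  have hle : (S ∩ Aset k n).ncard ≤ 3 := by
    by_contra hgt
    push_neg at hgt
    set T : Set (GVert k n) := {mkA .p1 t0, mkA .p2 t0, mkA .q2 t0} with hT
    set S' : Set (GVert k n) := (S \ Aset k n) ∪ T with hS'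
    have hTsub : T ⊆ Aset k n := by
      rintro x (rfl | rfl | rfl) <;> exact mkA_mem_Aset _ _
    have hp1' : (mkA .p1 t0 : GVert k n) ∈ S' := Or.inr (Or.inl rfl)
    have hp2' : (mkA .p2 t0 : GVert k n) ∈ S' := Or.inr (Or.inr (Or.inl rfl))
    have hq2' : (mkA .q2 t0 : GVert k n) ∈ S' := Or.inr (Or.inr (Or.inr rfl))
    have hSS' : ∀ x ∈ S, x ∉ Aset k n → x ∈ S' := fun x hx hxa => Or.inl ⟨hx, hxa⟩
    -- S' is dominating
    have hdom' : ∀ v : GVert k n, v ∈ S' ∨ ∃ u ∈ S', (graphGF k n F).Adj u v := by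
      intro v
      by_cases hv : v ∈ Aset k n
      · obtain ⟨w, t, rfl⟩ := hv
        rw [tsub t]
        cases w with
        | p1 => exact Or.inl hp1'
        | p2 => exact Or.inl hp2'
        | q2 => exact Or.inl hq2'
        | p3 => exact Or.inr ⟨_, hp2', adjA t0 (by decide) trivial⟩
        | q1 => exact Or.inr ⟨_, hp1', adjA t0 (by decide) trivial⟩
        | r1 => exact Or.inr ⟨_, hp2', adjA t0 (by decide) trivial⟩
        | r2 => exact Or.inr ⟨_, hq2', adjA t0 (by decide) trivial⟩
      · rcases hdom v with h | ⟨u, hu, hadj⟩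
        · exact Or.inl (Or.inl ⟨h, hv⟩)
        · by_cases huA : u ∈ Aset k n
          · obtain ⟨w, t, rfl⟩ := huA
            obtain ⟨hw, -⟩ := cross hadj hv
            subst hw
            rw [tsub t] at hadj
            exact Or.inr ⟨_, hp1', hadj⟩
          · exact Or.inr ⟨u, Or.inl ⟨hu, huA⟩, hadj⟩
    -- S' is connected
    have hreach : ∀ x : ↑S',
        ((graphGF k n F).induce S').Reachable x ⟨mkA .p1 t0, hp1'⟩ := by
      rintro ⟨x, hx⟩
      rcases hx with hx | hx
      · obtain ⟨w⟩ := hconn.preconnected ⟨x, hx.1⟩ ⟨mkA .p1 t0, hp1S⟩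
        have hma : fv t0 x ∈ S' := by
          rw [fv_of_not_mem hx.2]; exact Or.inl hx
        have hmb : fv t0 (mkA .p1 t0) ∈ S' := by
          rw [fv_of_mem (mkA_mem_Aset AVert.p1 t0)]; exact hp1'
        have hr := transfer hkodd hp1' hSS' w hma hmb
        have e1 : (⟨x, Or.inl hx⟩ : ↑S') = ⟨fv t0 x, hma⟩ :=
          Subtype.ext (fv_of_not_mem hx.2 t0).symm
        have e2 : (⟨mkA .p1 t0, hp1'⟩ : ↑S') = ⟨fv t0 (mkA .p1 t0), hmb⟩ :=
          Subtype.ext (fv_of_mem (mkA_mem_Aset AVert.p1 t0) t0).symm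
        rw [e1, e2]
        exact hr
      · rcases hx with rfl | rfl | rfl
        · rfl
        · have hadj : ((graphGF k n F).induce S').Adj ⟨mkA .p2 t0, hp2'⟩
              ⟨mkA .p1 t0, hp1'⟩ :=
            (adjA t0 (by decide) trivial : (graphGF k n F).Adj (mkA .p1 t0) (mkA .p2 t0)).symm
          exact hadj.reachable
        · have hadj1 : ((graphGF k n F).induce S').Adj ⟨mkA .q2 t0, hq2'⟩
              ⟨mkA .p2 t0, hp2'⟩ :=
            (adjA t0 (by decide) trivial : (graphGF k n F).Adj (mkA .p2 t0) (mkA .q2 t0)).symm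
          have hadj2 : ((graphGF k n F).induce S').Adj ⟨mkA .p2 t0, hp2'⟩
              ⟨mkA .p1 t0, hp1'⟩ :=
            (adjA t0 (by decide) trivial : (graphGF k n F).Adj (mkA .p1 t0) (mkA .p2 t0)).symm
          exact hadj1.reachable.trans hadj2.reachable
    have hne' : Nonempty ↑S' := ⟨⟨mkA .p1 t0, hp1'⟩⟩
    have hconn' : ((graphGF k n F).induce S').Connected :=
      ⟨fun x y => (hreach x).trans (hreach y).symm⟩
    -- cardinality comparison
    have hdisj : Disjoint (S \ Aset k n) T :=
      Set.disjoint_left.mpr fun x hx hxT => hx.2 (hTsub hxT)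
    have hcT : T.ncard = 3 :=
      Set.ncard_eq_three.mpr ⟨_, _, _, by simp [mkA], by simp [mkA], by simp [mkA], rfl⟩
    have hcS' : S'.ncard = (S \ Aset k n).ncard + 3 := by
      rw [hS', Set.ncard_union_eq hdisj (Set.toFinite _) (Set.toFinite _), hcT]
    have hcS : (S ∩ Aset k n).ncard + (S \ Aset k n).ncard = S.ncard :=
      Set.ncard_inter_add_ncard_diff_eq_ncard S (Aset k n) (Set.toFinite _)
    have hCDS' : IsConnDomSet (graphGF k n F) S' := ⟨hdom', hconn'⟩
    have hleS' : connDomNum (graphGF k n F) ≤ S'.ncard :=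
      Nat.sInf_le ⟨S', hCDS', rfl⟩
    omega
  omega

end CDG
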